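/- arXiv:1903.12289 — 2 statements merged into one kernel-verified Lean document; each statement's English description precedes it below -/
import Mathlib

section
/- Fix W, E, T₀, ρ > 0, Δ > 0 and a sampling period T_s with 0 < T_s < 1/(2W). If two signals x, y ∈ C_{W,E,T₀,ρ} satisfy [x(nT_s)]* = [y(nT_s)]* for every n ∈ ℤ (modulo reduction applied to each sample), then x(t) = y(t) for all t ∈ ℝ. In other words, every signal in C_{W,E,T₀,ρ} is uniquely determined by (and hence perfectly recoverable from) its modulo-Δ-reduced samples taken at any rate above the Nyquist rate. -/
open MeasureTheory Real

/-- Modulo reduction: the unique element of `[-Δ/2, Δ/2)` congruent to `x` modulo `Δ`. -/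
noncomputable def modStar (Δ x : ℝ) : ℝ := Δ * Int.fract ((x + Δ / 2) / Δ) - Δ / 2

/-- Modulo reduction of a complex number: real and imaginary parts are reduced separately. -/
noncomputable def cmodStar (Δ : ℝ) (z : ℂ) : ℂ :=
  (modStar Δ z.re : ℂ) + (modStar Δ z.im : ℂ) * Complex.I

/-- The class `C_{W,E,T₀,ρ}` of finite-energy bandlimited signals with decaying tails. -/
def signalClass (W E T₀ ρ : ℝ) : Set (ℝ → ℂ) :=
  {x | ∃ X : ℝ → ℂ, MemLp X 2 volume ∧
    (∀ t : ℝ, x t = ∫ f in (-W)..W, X f * Complex.exp (2 * Real.pi * Complex.I * f * t)) ∧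
    (∫ t : ℝ, ‖x t‖ ^ 2) ≤ E ∧
    ∀ t : ℝ, T₀ ≤ |t| → ‖x t‖ ≤ |t| ^ (-ρ)}

open AddCircle

lemma modStar_inj {Δ a b : ℝ} (hΔ : 0 < Δ) (h : modStar Δ a = modStar Δ b) :
    ∃ k : ℤ, a - b = k * Δ := by
  unfold modStar at h
  have h2 : Int.fract ((a + Δ / 2) / Δ) = Int.fract ((b + Δ / 2) / Δ) := by
    nlinarith [h]
  obtain ⟨z, hz⟩ := Int.fract_eq_fract.mp h2
  refine ⟨z, ?_⟩
  have : (a + Δ / 2) / Δ - (b + Δ / 2) / Δ = (a - b) / Δ := by ring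
  rw [this] at hz
  field_simp at hz
  linarith [hz]

lemma lattice_small {Δ : ℝ} (hΔ : 0 < Δ) {k m : ℤ} {z : ℂ}
    (hz : z = Δ * k + Δ * m * Complex.I) (h : ‖z‖ < Δ) : z = 0 := by
  have hre : z.re = Δ * k := by simp [hz]
  have him : z.im = Δ * m := by simp [hz]
  have h1 : |z.re| ≤ ‖z‖ := Complex.abs_re_le_norm z
  have h2 : |z.im| ≤ ‖z‖ := Complex.abs_im_le_norm z
  have hk : k = 0 := by
    by_contra hk0
    have : (1:ℝ) ≤ |(k:ℝ)| := by
      have := Int.one_le_abs (by exact_mod_cast hk0 : k ≠ 0)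
      exact_mod_cast this
    rw [hre] at h1
    rw [abs_mul, abs_of_pos hΔ] at h1
    nlinarith
  have hm : m = 0 := by
    by_contra hm0
    have : (1:ℝ) ≤ |(m:ℝ)| := by
      have := Int.one_le_abs (by exact_mod_cast hm0 : m ≠ 0)
      exact_mod_cast this
    rw [him] at h2
    rw [abs_mul, abs_of_pos hΔ] at h2
    nlinarith
  simp [hz, hk, hm]

lemma expChar_cont (t : ℝ) :
    Continuous fun f : ℝ => Complex.exp (2 * Real.pi * Complex.I * f * t) := by
  fun_prop

lemma expChar_norm (f t : ℝ) :
    ‖Complex.exp (2 * Real.pi * Complex.I * f * t)‖ = 1 := by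
  rw [Complex.norm_exp]
  have : (2 * (Real.pi:ℂ) * Complex.I * f * t).re = 0 := by
    simp [Complex.mul_re, Complex.mul_im]
  rw [this, Real.exp_zero]

lemma intervalIntegrable_mul_bdd {U : ℝ → ℂ} (hU : MemLp U 2 volume)
    {φ : ℝ → ℂ} (hφ : Continuous φ) (hbd : ∀ s, ‖φ s‖ ≤ 1) (a b : ℝ) :
    IntervalIntegrable (fun f => U f * φ f) volume a b := by
  rw [intervalIntegrable_iff]
  haveI : IsFiniteMeasure (volume.restrict (Set.uIoc a b)) := by
    constructor
    rw [Measure.restrict_apply_univ]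
    exact measure_Ioc_lt_top
  have h1 : MemLp U 2 (volume.restrict (Set.uIoc a b)) := hU.restrict _
  have h2 : Integrable U (volume.restrict (Set.uIoc a b)) :=
    (h1.mono_exponent (p := 1) (by norm_num)).integrable le_rfl
  have := h2.bdd_mul hφ.aestronglyMeasurable (c := 1) (Filter.Eventually.of_forall hbd)
  exact this.congr (Filter.Eventually.of_forall fun t => mul_comm _ _)

lemma continuous_eq_zero_of_ae_zero {q : ℝ → ℂ} (hq : Continuous q) {s : Set ℝ}
    (hs : IsOpen s) (h : ∀ᵐ x ∂volume.restrict s, q x = 0) : ∀ x ∈ s, q x = 0 := by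
  by_contra hc
  push_neg at hc
  obtain ⟨x₀, hx₀s, hx₀⟩ := hc
  set u := s ∩ q ⁻¹' {0}ᶜ with hu
  have huo : IsOpen u := hs.inter (isOpen_compl_singleton.preimage hq)
  have hne : u.Nonempty := ⟨x₀, hx₀s, hx₀⟩
  have hpos : 0 < volume u := huo.measure_pos volume hne
  have hnull : volume.restrict s {x | ¬ q x = 0} = 0 := by
    rw [← MeasureTheory.ae_iff]; exact h
  rw [Measure.restrict_apply (by
    have : {x | ¬ q x = 0} = q ⁻¹' {0}ᶜ := by ext x; simp
    rw [this]
    exact (isOpen_compl_singleton.preimage hq).measurableSet)] at hnull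
  have : volume u = 0 :=
    measure_mono_null (show u ⊆ {x | ¬ q x = 0} ∩ s from fun x hx => ⟨hx.2, hx.1⟩) hnull
  exact absurd this hpos.ne'

lemma Lp_coeFn_sum {α : Type*} [MeasurableSpace α] {μ : Measure α} {ι : Type*} (s : Finset ι)
    (f : ι → Lp ℂ 2 μ) : ⇑(∑ i ∈ s, f i) =ᵐ[μ] fun x => ∑ i ∈ s, f i x := by
  classical
  induction s using Finset.induction_on with
  | empty => simp only [Finset.sum_empty]; exact Lp.coeFn_zero ℂ 2 μ
  | insert a t hnotmem ih =>
    rw [Finset.sum_insert hnotmem]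
    filter_upwards [Lp.coeFn_add (f a) (∑ i ∈ t, f i), ih] with x h1 h2
    rw [h1]
    simp only [Pi.add_apply, h2, Finset.sum_insert hnotmem]

lemma fourierCoeff_congr_ae' {T : ℝ} [hT : Fact (0 < T)] {f g : AddCircle T → ℂ}
    (h : f =ᵐ[AddCircle.haarAddCircle (T := T)] g) (n : ℤ) :
    fourierCoeff f n = fourierCoeff g n := by
  unfold fourierCoeff
  apply integral_congr_ae
  filter_upwards [h] with t ht
  rw [ht]

set_option maxHeartbeats 1000000 in
/-- Above the Nyquist rate, a signal in `C_{W,E,T₀,ρ}` is uniquely determined by its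
modulo-`Δ`-reduced samples. -/
theorem perfect_recovery_from_modulo_samples
    (W E T₀ ρ Δ Ts : ℝ) (hW : 0 < W) (hE : 0 < E) (hT₀ : 0 < T₀) (hρ : 0 < ρ)
    (hΔ : 0 < Δ) (hTs : 0 < Ts) (hNyq : Ts < 1 / (2 * W))
    (x y : ℝ → ℂ) (hx : x ∈ signalClass W E T₀ ρ) (hy : y ∈ signalClass W E T₀ ρ)
    (hsamp : ∀ n : ℤ, cmodStar Δ (x (n * Ts)) = cmodStar Δ (y (n * Ts))) :
    ∀ t : ℝ, x t = y t := by
  classical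
  obtain ⟨X, hX2, hXrep, -, hXtail⟩ := hx
  obtain ⟨Y, hY2, hYrep, -, hYtail⟩ := hy
  -- measurable representatives
  set X₀ := hX2.aestronglyMeasurable.mk X with hX₀def
  have hX₀sm : StronglyMeasurable X₀ := hX2.aestronglyMeasurable.stronglyMeasurable_mk
  have hXX₀ : X =ᵐ[volume] X₀ := hX2.aestronglyMeasurable.ae_eq_mk
  set Y₀ := hY2.aestronglyMeasurable.mk Y with hY₀def
  have hY₀sm : StronglyMeasurable Y₀ := hY2.aestronglyMeasurable.stronglyMeasurable_mk
  have hYY₀ : Y =ᵐ[volume] Y₀ := hY2.aestronglyMeasurable.ae_eq_mk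
  have hX₀2 : MemLp X₀ 2 volume := hX2.ae_eq hXX₀
  have hY₀2 : MemLp Y₀ 2 volume := hY2.ae_eq hYY₀
  set Z : ℝ → ℂ := fun f => X₀ f - Y₀ f with hZdef
  have hZsm : StronglyMeasurable Z := hX₀sm.sub hY₀sm
  have hZ2 : MemLp Z 2 volume := hX₀2.sub hY₀2
  -- representation of the difference
  have hzrep : ∀ t : ℝ, x t - y t
      = ∫ f in (-W)..W, Z f * Complex.exp (2 * Real.pi * Complex.I * f * t) := by
    intro t
    have hXint := intervalIntegrable_mul_bdd hX₀2 (expChar_cont t)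
      (fun s => le_of_eq (expChar_norm s t)) (-W) W
    have hYint := intervalIntegrable_mul_bdd hY₀2 (expChar_cont t)
      (fun s => le_of_eq (expChar_norm s t)) (-W) W
    have h1 : x t = ∫ f in (-W)..W, X₀ f * Complex.exp (2 * Real.pi * Complex.I * f * t) := by
      rw [hXrep t]
      apply intervalIntegral.integral_congr_ae
      filter_upwards [hXX₀] with f hf _
      rw [hf]
    have h2 : y t = ∫ f in (-W)..W, Y₀ f * Complex.exp (2 * Real.pi * Complex.I * f * t) := by
      rw [hYrep t]
      apply intervalIntegral.integral_congr_ae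
      filter_upwards [hYY₀] with f hf _
      rw [hf]
    rw [h1, h2, ← intervalIntegral.integral_sub hXint hYint]
    apply intervalIntegral.integral_congr
    intro f _
    simp only [hZdef]
    ring
  -- tail bound: samples eventually vanish
  set M : ℝ := max T₀ ((2 / Δ) ^ (1/ρ) + 1) with hMdef
  have hM0 : 0 < M := lt_of_lt_of_le hT₀ (le_max_left _ _)
  have hMT₀ : T₀ ≤ M := le_max_left _ _
  have hMρ : 2 / Δ < M ^ ρ := by
    have h1 : (2 / Δ) ^ (1/ρ) < M :=
      lt_of_lt_of_le (lt_add_one _) (le_max_right _ _)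
    have h2 : ((2 / Δ) ^ (1/ρ)) ^ ρ < M ^ ρ :=
      Real.rpow_lt_rpow (Real.rpow_nonneg (by positivity) _) h1 hρ
    calc 2 / Δ = ((2 / Δ) ^ (1/ρ)) ^ ρ := by
          rw [← Real.rpow_mul (by positivity : (0:ℝ) ≤ 2/Δ), one_div_mul_cancel hρ.ne',
            Real.rpow_one]
      _ < M ^ ρ := h2
  set N : ℕ := ⌈M / Ts⌉₊ + 1 with hNdef
  have hkey : ∀ n : ℤ, (N:ℤ) ≤ |n| → x ((n:ℝ) * Ts) - y ((n:ℝ) * Ts) = 0 := by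
    intro n hn
    set t : ℝ := (n:ℝ) * Ts with htdef
    have habs : M ≤ |t| := by
      have h1 : M / Ts ≤ (N:ℝ) := le_trans (Nat.le_ceil _) (by
        rw [hNdef]; push_cast; linarith)
      have h2 : (N:ℝ) ≤ |(n:ℝ)| := by
        rw [← Int.cast_abs]
        exact_mod_cast hn
      have h3 : |t| = |(n:ℝ)| * Ts := by
        rw [htdef, abs_mul, abs_of_pos hTs]
      rw [h3]
      calc M = (M / Ts) * Ts := by field_simp
        _ ≤ (N:ℝ) * Ts := by nlinarith
        _ ≤ |(n:ℝ)| * Ts := by nlinarith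
    have hT₀t : T₀ ≤ |t| := le_trans hMT₀ habs
    have hnorm : ‖x t - y t‖ < Δ := by
      have hb1 : ‖x t‖ ≤ |t| ^ (-ρ) := hXtail t hT₀t
      have hb2 : ‖y t‖ ≤ |t| ^ (-ρ) := hYtail t hT₀t
      have hb3 : |t| ^ (-ρ) ≤ M ^ (-ρ) := by
        rw [Real.rpow_neg (abs_nonneg t), Real.rpow_neg hM0.le]
        apply inv_anti₀ (Real.rpow_pos_of_pos hM0 ρ)
        exact Real.rpow_le_rpow hM0.le habs hρ.le
      have hb4 : M ^ (-ρ) < Δ / 2 := by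
        rw [Real.rpow_neg hM0.le, inv_eq_one_div]
        have h5 : (0:ℝ) < 2 / Δ := by positivity
        calc 1 / M ^ ρ < 1 / (2 / Δ) := one_div_lt_one_div_of_lt h5 hMρ
          _ = Δ / 2 := by rw [one_div_div]
      calc ‖x t - y t‖ ≤ ‖x t‖ + ‖y t‖ := norm_sub_le _ _
        _ ≤ |t| ^ (-ρ) + |t| ^ (-ρ) := by linarith
        _ ≤ M ^ (-ρ) + M ^ (-ρ) := by linarith
        _ < Δ := by linarith
    -- lattice structure
    have hre := congrArg Complex.re (hsamp n)
    have him := congrArg Complex.im (hsamp n)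
    simp only [cmodStar, Complex.add_re, Complex.ofReal_re, Complex.mul_re, Complex.ofReal_im,
      Complex.I_re, Complex.I_im, Complex.add_im, Complex.mul_im] at hre him
    norm_num at hre him
    obtain ⟨k, hk⟩ := modStar_inj hΔ hre
    obtain ⟨m, hm⟩ := modStar_inj hΔ him
    refine lattice_small hΔ (k := k) (m := m) (z := x t - y t) ?_ hnorm
    apply Complex.ext
    · simp only [Complex.sub_re, Complex.add_re, Complex.ofReal_re, Complex.mul_re,
        Complex.I_re, Complex.I_im, Complex.ofReal_im, Complex.intCast_re]
      norm_num
      linarith [hk]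
    · simp only [Complex.sub_im, Complex.add_im, Complex.ofReal_im, Complex.mul_im,
        Complex.I_re, Complex.I_im, Complex.ofReal_re, Complex.intCast_im]
      norm_num
      linarith [hm]
  -- the circle of circumference L = 1/Ts
  set L : ℝ := 1 / Ts with hLdef
  have hL : 0 < L := by rw [hLdef]; positivity
  haveI : Fact (0 < L) := ⟨hL⟩
  have hWL : W < L / 2 := by
    have h2W : (0:ℝ) < 2 * W := by positivity
    have h1 : Ts * (2 * W) < 1 := by
      have := (lt_div_iff₀ h2W).mp hNyq
      linarith
    rw [hLdef, lt_div_iff₀ (by norm_num : (0:ℝ) < 2), lt_div_iff₀ hTs]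
    nlinarith
  set a : ℝ := -(L/2) with hadef
  have haL : a + L = L / 2 := by rw [hadef]; ring
  have haW : Set.Ioc (-W) W ⊆ Set.Ioc a (a + L) := by
    apply Set.Ioc_subset_Ioc
    · rw [hadef]; linarith
    · rw [haL]; linarith
  set Zi : ℝ → ℂ := Set.indicator (Set.Ioc (-W) W) Z with hZidef
  have hZism : StronglyMeasurable Zi := hZsm.indicator measurableSet_Ioc
  set g : AddCircle L → ℂ := AddCircle.liftIoc L a Zi with hgdef
  have hgmeas : Measurable g := by
    have h1 : Measurable (⇑(AddCircle.measurableEquivIoc (T := L) a)) :=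
      (AddCircle.measurableEquivIoc (T := L) a).measurable
    exact (hZism.measurable.comp measurable_subtype_coe).comp h1
  set c : ℤ → ℂ := fun n => fourierCoeff g n with hcdef
  have hTsC : (Ts:ℂ) ≠ 0 := by exact_mod_cast hTs.ne'
  have hLC : (L:ℂ) = (Ts:ℂ)⁻¹ := by rw [hLdef]; push_cast; rw [one_div]
  have hLC0 : (L:ℂ) ≠ 0 := by rw [hLC]; exact inv_ne_zero hTsC
  have hcoeff : ∀ n : ℤ, c n
      = (Ts:ℂ) * (x (((-n : ℤ):ℝ) * Ts) - y (((-n : ℤ):ℝ) * Ts)) := by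
    intro n
    have hle : a ≤ a + L := by linarith
    simp only [hcdef]
    rw [fourierCoeff_eq_intervalIntegral g n a]
    have h1 : (∫ xv in a..a+L, fourier (-n) ((xv : ℝ) : AddCircle L) • g ↑xv)
        = ∫ xv in a..a+L, fourier (-n) ((xv : ℝ) : AddCircle L) • Zi xv := by
      apply intervalIntegral.integral_congr_ae
      apply Filter.Eventually.of_forall
      intro xv hxv
      rw [Set.uIoc_of_le hle] at hxv
      rw [hgdef, AddCircle.liftIoc_coe_apply hxv]
    have h2 : (fun xv => fourier (-n) ((xv : ℝ) : AddCircle L) • Zi xv)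
        = Set.indicator (Set.Ioc (-W) W) (fun xv => fourier (-n) ((xv : ℝ) : AddCircle L) • Z xv) := by
      funext xv
      by_cases hxv : xv ∈ Set.Ioc (-W) W
      · rw [hZidef]
        simp [Set.indicator_of_mem hxv]
      · rw [hZidef]
        simp [Set.indicator_of_notMem hxv]
    have h3 : (∫ xv in a..a+L, fourier (-n) ((xv : ℝ) : AddCircle L) • Zi xv)
        = ∫ xv in (-W)..W, fourier (-n) ((xv : ℝ) : AddCircle L) • Z xv := by
      rw [h2, intervalIntegral.integral_of_le hle,
        setIntegral_indicator measurableSet_Ioc,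
        Set.inter_eq_right.mpr haW,
        ← intervalIntegral.integral_of_le (by linarith : -(W:ℝ) ≤ W)]
    rw [h1, h3]
    have h4 : ∀ xv : ℝ, fourier (-n) ((xv : ℝ) : AddCircle L) • Z xv
        = Z xv * Complex.exp (2 * Real.pi * Complex.I * xv
            * ((((-n : ℤ):ℝ) * Ts : ℝ) : ℂ)) := by
      intro xv
      rw [fourier_coe_apply, smul_eq_mul, mul_comm]
      congr 1
      rw [hLC]
      push_cast
      field_simp
    simp_rw [h4]
    rw [← hzrep (((-n : ℤ):ℝ) * Ts)]
    rw [hLdef, one_div_one_div, Complex.real_smul]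
  set N' : ℤ := (N : ℤ) with hN'def
  have hczero : ∀ i : ℤ, i ∉ Finset.Icc (-N') N' → c i = 0 := by
    intro i hi
    have habs : (N:ℤ) ≤ |(-i)| := by
      rw [abs_neg]
      rw [Finset.mem_Icc] at hi
      rw [hN'def] at hi
      rcases le_or_gt i 0 with h | h
      · rw [abs_of_nonpos h]; omega
      · rw [abs_of_pos h]; omega
    rw [hcoeff i, hkey (-i) habs, mul_zero]
  -- membership in L² of the periodization
  have hgcomp : ∀ᵐ (xv : ℝ) ∂(volume.restrict (Set.Ioc a (a+L))), g ↑xv = Zi xv := by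
    filter_upwards [ae_restrict_mem measurableSet_Ioc] with xv hxv
    rw [hgdef]
    exact AddCircle.liftIoc_coe_apply hxv
  have hZiLp : MemLp Zi 2 (volume.restrict (Set.Ioc a (a+L))) :=
    (hZ2.indicator measurableSet_Ioc).restrict _
  have hgmk : MemLp (fun xv : ℝ => g ↑xv) 2 (volume.restrict (Set.Ioc a (a+L))) :=
    hZiLp.ae_eq (hgcomp.mono fun xv h => h.symm)
  have hmap := (AddCircle.measurePreserving_mk L a).map_eq
  have hgvol : MemLp g 2 (volume : Measure (AddCircle L)) := by
    rw [← hmap]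
    exact (memLp_map_measure_iff hgmeas.aestronglyMeasurable
      AddCircle.measurable_mk'.aemeasurable).mpr hgmk
  have hghaar : MemLp g 2 haarAddCircle := by
    have h1 : (volume : Measure (AddCircle L)) = (ENNReal.ofReal L) • haarAddCircle :=
      AddCircle.volume_eq_smul_haarAddCircle
    have h2 := hgvol.smul_measure (c := (ENNReal.ofReal L)⁻¹)
      (ENNReal.inv_ne_top.mpr (ENNReal.ofReal_pos.mpr hL).ne')
    rw [h1, smul_smul, ENNReal.inv_mul_cancel (ENNReal.ofReal_pos.mpr hL).ne'
      ENNReal.ofReal_ne_top, one_smul] at h2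
    exact h2
  set F := hghaar.toLp g with hFdef
  have hFcoeff : ∀ i : ℤ, fourierCoeff (⇑F) i = c i := by
    intro i
    simp only [hcdef]
    exact fourierCoeff_congr_ae' hghaar.coeFn_toLp i
  have hsumF := hasSum_fourier_series_L2 F
  simp_rw [hFcoeff] at hsumF
  set sF : Finset ℤ := Finset.Icc (-N') N' with hsFdef
  have hsumFin : HasSum (fun i => c i • fourierLp 2 i)
      (∑ i ∈ sF, c i • (fourierLp 2 i : Lp ℂ 2 (haarAddCircle (T := L)))) :=
    hasSum_sum_of_ne_finset_zero (by
      intro i hi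
      rw [hczero i hi, zero_smul])
  have hFeq : F = ∑ i ∈ sF, c i • fourierLp 2 i := hsumF.unique hsumFin
  have hq : g =ᵐ[haarAddCircle] fun τ : AddCircle L => ∑ i ∈ sF, c i • fourier i τ := by
    have h1 : ⇑F =ᵐ[haarAddCircle (T := L)] g := hghaar.coeFn_toLp
    have h3 := Lp_coeFn_sum sF (fun i => c i • (fourierLp 2 i : Lp ℂ 2 (haarAddCircle (T := L))))
    have h5 : ∀ i : ℤ, ⇑(c i • (fourierLp 2 i : Lp ℂ 2 (haarAddCircle (T := L))))
        =ᵐ[haarAddCircle] fun τ => c i • fourier i τ := by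
      intro i
      filter_upwards [Lp.coeFn_smul (c i) (fourierLp 2 i), coeFn_fourierLp (T := L) 2 i]
        with τ h6 h7
      rw [h6]
      simp only [Pi.smul_apply, h7]
    have h8 : (∀ᵐ τ ∂(haarAddCircle (T := L)), ∀ i ∈ sF,
        (⇑(c i • (fourierLp 2 i : Lp ℂ 2 (haarAddCircle (T := L))))) τ = c i • fourier i τ) :=
      (Filter.eventually_all_finset sF).mpr (fun i _ => h5 i)
    have h9 : ⇑F =ᵐ[haarAddCircle (T := L)]
        fun τ : AddCircle L => ∑ i ∈ sF, c i • fourier i τ := by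
      rw [hFeq]
      filter_upwards [h3, h8] with τ h10 h11
      rw [h10]
      exact Finset.sum_congr rfl fun i hi => h11 i hi
    exact h1.symm.trans h9
  -- the analytic trigonometric polynomial
  set Φ : ℂ → ℂ := fun w => ∑ i ∈ sF, c i * Complex.exp (2 * Real.pi * Complex.I * i / L * w)
    with hΦdef
  have hΦdiff : Differentiable ℂ Φ := by
    rw [hΦdef]
    apply Differentiable.fun_sum
    intro i _
    exact ((differentiable_id.const_mul _).cexp).const_mul _
  have hvol_ae : g =ᵐ[(volume : Measure (AddCircle L))]
      fun τ : AddCircle L => ∑ i ∈ sF, c i • fourier i τ := by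
    rw [AddCircle.volume_eq_smul_haarAddCircle]
    exact Measure.ae_smul_measure hq _
  have hrest := (AddCircle.measurePreserving_mk L a).quasiMeasurePreserving.ae_eq hvol_ae
  have hZiΦ : ∀ᵐ xv ∂volume.restrict (Set.Ioc a (a+L)), Zi xv = Φ xv := by
    filter_upwards [hgcomp, hrest] with xv h1 h2
    rw [← h1]
    have h3 : (fun τ : AddCircle L => ∑ i ∈ sF, c i • fourier i τ) ↑xv = Φ xv := by
      rw [hΦdef]
      simp only [smul_eq_mul]
      refine Finset.sum_congr rfl fun i _ => ?_
      rw [fourier_coe_apply]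
      congr 2
      ring
    rw [← h3]
    exact h2
  have hsub2 : Set.Ioo W (L/2) ⊆ Set.Ioc a (a + L) := by
    intro xv hxv
    constructor
    · rw [hadef]; linarith [hxv.1]
    · rw [haL]; linarith [hxv.2]
  have hgap : ∀ᵐ xv : ℝ ∂volume.restrict (Set.Ioo W (L/2)), Φ (xv:ℂ) = 0 := by
    have h1 := ae_restrict_of_ae_restrict_of_subset hsub2 hZiΦ
    filter_upwards [h1, ae_restrict_mem measurableSet_Ioo] with xv h2 h3
    rw [← h2, hZidef]
    apply Set.indicator_of_notMem
    intro h4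
    exact absurd h4.2 (not_le.mpr h3.1)
  have hΦRcont : Continuous fun xv : ℝ => Φ (xv:ℂ) :=
    hΦdiff.continuous.comp Complex.continuous_ofReal
  have hgapall : ∀ xv ∈ Set.Ioo W (L/2), Φ (xv:ℂ) = 0 :=
    continuous_eq_zero_of_ae_zero hΦRcont isOpen_Ioo hgap
  have hΦan : AnalyticOnNhd ℂ Φ Set.univ :=
    hΦdiff.differentiableOn.analyticOnNhd isOpen_univ
  set z₀ : ℝ := (W + L/2)/2 with hz₀def
  have hz₀ : z₀ ∈ Set.Ioo W (L/2) := by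
    constructor <;> (rw [hz₀def]; linarith)
  set ε : ℝ := (L/2 - z₀)/2 with hεdef
  have hε : 0 < ε := by
    rw [hεdef]
    linarith [hz₀.2]
  have humem : ∀ k : ℕ, z₀ + ε/((k:ℝ)+1) ∈ Set.Ioo W (L/2) := by
    intro k
    have hk1 : (0:ℝ) < (k:ℝ)+1 := by positivity
    have h1 : 0 < ε/((k:ℝ)+1) := by positivity
    have h2 : ε/((k:ℝ)+1) ≤ ε := div_le_self hε.le (by linarith)
    constructor
    · linarith [hz₀.1]
    · have h3 : ε = (L/2 - z₀)/2 := hεdef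
      linarith [hz₀.2]
  have htend : Filter.Tendsto (fun k : ℕ => ((z₀ + ε/((k:ℝ)+1) : ℝ) : ℂ)) Filter.atTop
      (nhdsWithin (z₀:ℂ) {(z₀:ℂ)}ᶜ) := by
    rw [tendsto_nhdsWithin_iff]
    constructor
    · have h1 : Filter.Tendsto (fun k : ℕ => ε * (1/((k:ℝ)+1))) Filter.atTop (nhds (ε * 0)) :=
        tendsto_one_div_add_atTop_nhds_zero_nat.const_mul ε
      rw [mul_zero] at h1
      have h2 : Filter.Tendsto (fun k : ℕ => z₀ + ε/((k:ℝ)+1)) Filter.atTop (nhds (z₀ + 0)) := by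
        apply Filter.Tendsto.const_add
        simp_rw [mul_one_div] at h1
        exact h1
      rw [add_zero] at h2
      exact (Complex.continuous_ofReal.tendsto z₀).comp h2
    · apply Filter.Eventually.of_forall
      intro k
      simp only [Set.mem_compl_iff, Set.mem_singleton_iff]
      intro hcon
      have h3 : z₀ + ε/((k:ℝ)+1) = z₀ := by exact_mod_cast hcon
      have hk1 : (0:ℝ) < (k:ℝ)+1 := by positivity
      have h4 : 0 < ε/((k:ℝ)+1) := by positivity
      linarith
  have hfreq : ∃ᶠ w in nhdsWithin (z₀:ℂ) {(z₀:ℂ)}ᶜ, Φ w = 0 :=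
    htend.frequently (Filter.Frequently.of_forall fun k => hgapall _ (humem k))
  have hΦ0 : ∀ w : ℂ, Φ w = 0 := by
    have h1 := hΦan.eqOn_zero_of_preconnected_of_frequently_eq_zero isPreconnected_univ
      (Set.mem_univ ((z₀:ℝ):ℂ)) hfreq
    intro w
    exact h1 (Set.mem_univ w)
  have hZ0 : ∀ᵐ f ∂volume.restrict (Set.Ioc (-W) W), Z f = 0 := by
    have h1 := ae_restrict_of_ae_restrict_of_subset haW hZiΦ
    filter_upwards [h1, ae_restrict_mem measurableSet_Ioc] with f h2 h3
    rw [hZidef, Set.indicator_of_mem h3] at h2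
    rw [h2, hΦ0]
  intro t
  have h := hzrep t
  have h2 : (∫ f in (-W)..W, Z f * Complex.exp (2 * Real.pi * Complex.I * f * t)) = 0 := by
    rw [intervalIntegral.integral_of_le (by linarith : -(W:ℝ) ≤ W)]
    apply integral_eq_zero_of_ae
    filter_upwards [hZ0] with f hf
    simp [hf]
  rw [h2] at h
  exact sub_eq_zero.mp h
end

section
/- Let Δ > 0 and let a, p ∈ ℝ satisfy |a − p| < Δ/2. Then a = p + [[a]* − p]*, where [·]* denotes reduction modulo Δ into [−Δ/2, Δ/2). That is, a sample a can be exactly recovered from its modulo-reduced value [a]* together with any predictor p whose prediction error has magnitude less than Δ/2. -/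
lemma modStar_eq_sub (Δ x : ℝ) (hΔ : 0 < Δ) :
    modStar Δ x = x - Δ * ⌊(x + Δ / 2) / Δ⌋ := by
  unfold modStar
  rw [Int.fract]
  field_simp
  ring

lemma modStar_sub_int (Δ x : ℝ) (hΔ : 0 < Δ) (k : ℤ) :
    modStar Δ (x - Δ * k) = modStar Δ x := by
  unfold modStar
  congr 1
  congr 1
  have : (x - Δ * k + Δ / 2) / Δ = (x + Δ / 2) / Δ - k := by
    field_simp; ring
  rw [this, Int.fract_sub_intCast]

lemma modStar_of_mem (Δ x : ℝ) (hΔ : 0 < Δ) (h1 : -(Δ/2) ≤ x) (h2 : x < Δ/2) :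
    modStar Δ x = x := by
  rw [modStar_eq_sub Δ x hΔ]
  have hfloor : ⌊(x + Δ / 2) / Δ⌋ = 0 := by
    apply Int.floor_eq_zero_iff.mpr
    constructor
    · exact div_nonneg (by linarith) hΔ.le
    · rw [div_lt_one hΔ]; linarith
  rw [hfloor]
  simp

/-- A sample `a` is exactly recovered from its modulo-reduced value `[a]*` and any predictor `p`
whose prediction error is smaller than `Δ/2` in magnitude. -/
theorem recovery_from_prediction
    (Δ a p : ℝ) (hΔ : 0 < Δ) (hpred : |a - p| < Δ / 2) :
    a = p + modStar Δ (modStar Δ a - p) := by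
  have h1 : modStar Δ a - p = (a - p) - Δ * ⌊(a + Δ / 2) / Δ⌋ := by
    rw [modStar_eq_sub Δ a hΔ]; ring
  rw [h1, modStar_sub_int Δ (a - p) hΔ]
  rw [modStar_of_mem Δ (a - p) hΔ (by cases abs_lt.mp hpred; linarith) (abs_lt.mp hpred).2]
  ring
end
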